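/- Let Φ be a block-diagonal matrix with blocks Φ₁, …, Φ_M, and let u, û be nonzero vectors with h = Φu, ĥ = Φû. Then sin∠(h, ĥ) ≤ (σ_max(Φ)/σ_min(Φ)) · √2 · sin∠(u, û), where σ_max and σ_min denote the largest and smallest singular values of Φ (assumed σ_min(Φ) > 0). -/

import Mathlib

open Matrix

/-- Euclidean norm of a finite complex vector. -/
noncomputable def vnorm {ι : Type*} [Fintype ι] (v : ι → ℂ) : ℝ :=
  Real.sqrt (∑ i, Complex.normSq (v i))

/-- Standard complex inner product, conjugate-linear in the first argument. -/
noncomputable def cip {ι : Type*} [Fintype ι] (a b : ι → ℂ) : ℂ :=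
  ∑ i, (starRingEnd ℂ) (a i) * b i

/-- Sine of the principal angle: `sin∠(a,b) = ‖P_{b⊥} a‖ / ‖a‖`. -/
noncomputable def sinAngle {ι : Type*} [Fintype ι] (a b : ι → ℂ) : ℝ :=
  vnorm (a - (cip b a / ((vnorm b ^ 2 : ℝ) : ℂ)) • b) / vnorm a

open scoped ComplexInnerProductSpace

/-- The orthogonal projection onto the span of `b` minimizes distance. -/
lemma proj_min_aux {E : Type*} [NormedAddCommGroup E] [InnerProductSpace ℂ E]
    (a b : E) (c : ℂ) :
    ‖a - ((⟪b, a⟫ / ((‖b‖^2 : ℝ) : ℂ)) • b)‖ ≤ ‖a - c • b‖ := by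
  by_cases hb : b = 0
  · simp [hb]
  · set t : ℂ := ⟪b, a⟫ / ((‖b‖^2 : ℝ) : ℂ) with ht
    have hbn : ((‖b‖ : ℝ) : ℂ) ≠ 0 := by
      exact_mod_cast norm_ne_zero_iff.mpr hb
    have horth : ⟪a - t • b, b⟫ = (0:ℂ) := by
      rw [inner_sub_left, inner_smul_left, ht]
      rw [inner_self_eq_norm_sq_to_K]
      push_cast
      simp only [map_div₀, map_pow, Complex.conj_ofReal, inner_conj_symm]
      field_simp
      exact (by rw [sub_self, mul_zero, mul_zero] :
        ⟪a, b⟫ * (((‖b‖ : ℝ) : ℂ) ^ 2 - ((‖b‖ : ℝ) : ℂ) ^ 2) = ((‖b‖ : ℝ) : ℂ) ^ 2 * 0)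
    have horth2 : ⟪a - t • b, (t - c) • b⟫ = (0:ℂ) := by
      rw [inner_smul_right, horth, mul_zero]
    have hdecomp : a - c • b = (a - t • b) + (t - c) • b := by
      rw [sub_smul]; abel
    have hsq : ‖a - c • b‖^2 = ‖a - t • b‖^2 + ‖(t - c) • b‖^2 := by
      rw [hdecomp, @norm_add_sq ℂ, horth2]
      simp
    nlinarith [norm_nonneg (a - c • b), norm_nonneg (a - t • b), sq_nonneg ‖(t-c)•b‖]

lemma vnorm_eq {ι : Type*} [Fintype ι] (v : ι → ℂ) :
    vnorm v = ‖(WithLp.equiv 2 (ι → ℂ)).symm v‖ := by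
  rw [vnorm, EuclideanSpace.norm_eq]
  simp [← Complex.sq_norm]

lemma cip_eq {ι : Type*} [Fintype ι] (a b : ι → ℂ) :
    cip a b = ⟪(WithLp.equiv 2 (ι → ℂ)).symm a, (WithLp.equiv 2 (ι → ℂ)).symm b⟫ := by
  simp [cip, PiLp.inner_apply, RCLike.inner_apply]
  exact Finset.sum_congr rfl (fun i _ => mul_comm _ _)

lemma vnorm_nonneg {ι : Type*} [Fintype ι] (v : ι → ℂ) : 0 ≤ vnorm v := by
  rw [vnorm_eq]; exact norm_nonneg _

lemma vnorm_pos {ι : Type*} [Fintype ι] {v : ι → ℂ} (hv : v ≠ 0) : 0 < vnorm v := by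
  rw [vnorm_eq]
  rw [norm_pos_iff]
  intro h
  apply hv
  have := congrArg (WithLp.equiv 2 (ι → ℂ)) h
  simpa using this

/-- Projection minimality transported to `vnorm`/`cip`. -/
lemma vnorm_proj_min {ι : Type*} [Fintype ι] (a b : ι → ℂ) (c : ℂ) :
    vnorm (a - (cip b a / ((vnorm b ^ 2 : ℝ) : ℂ)) • b) ≤ vnorm (a - c • b) := by
  simp only [vnorm_eq, cip_eq]
  have h1 : ∀ (x : ℂ), (WithLp.equiv 2 (ι → ℂ)).symm (a - x • b)
      = (WithLp.equiv 2 (ι → ℂ)).symm a - x • (WithLp.equiv 2 (ι → ℂ)).symm b := by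
    intro x; simp
  rw [h1, h1]
  exact proj_min_aux _ _ c

/-- for a block-diagonal `Φ` with blocks `Φ₁,…,Φ_M`, nonzero `u, û`,
`h = Φu`, `ĥ = Φû`, and extreme singular values `σ_min(Φ) > 0`, `σ_max(Φ)`:
`sin∠(h, ĥ) ≤ (σ_max(Φ)/σ_min(Φ)) · √2 · sin∠(u, û)`. -/
theorem stmt10 (M K D : ℕ) (Φs : Fin M → Matrix (Fin K) (Fin D) ℂ)
    (Φ : Matrix (Fin K × Fin M) (Fin D × Fin M) ℂ)
    (hΦ : Φ = Matrix.blockDiagonal Φs)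
    (smax smin : ℝ) (hsmin : 0 < smin)
    (hupper : ∀ v : Fin D × Fin M → ℂ, vnorm (Φ.mulVec v) ≤ smax * vnorm v)
    (hlower : ∀ v : Fin D × Fin M → ℂ, smin * vnorm v ≤ vnorm (Φ.mulVec v))
    (u uh : Fin D × Fin M → ℂ) (hu : u ≠ 0) (huh : uh ≠ 0) :
    sinAngle (Φ.mulVec u) (Φ.mulVec uh) ≤
      (smax / smin) * Real.sqrt 2 * sinAngle u uh := by
  set h : Fin K × Fin M → ℂ := Φ.mulVec u with hh
  set hhat : Fin K × Fin M → ℂ := Φ.mulVec uh with hhhat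
  have hun : 0 < vnorm u := vnorm_pos hu
  have hhn : 0 < vnorm h := lt_of_lt_of_le (by positivity) (hlower u)
  set c₀ : ℂ := cip uh u / ((vnorm uh ^ 2 : ℝ) : ℂ) with hc₀
  set w : Fin D × Fin M → ℂ := u - c₀ • uh with hw
  have hsin_u : sinAngle u uh = vnorm w / vnorm u := rfl
  -- linearity: h - c₀ • hhat = Φ (u - c₀ • uh)
  have hlin : h - c₀ • hhat = Φ.mulVec w := by
    rw [hw, hh, hhhat, Matrix.mulVec_sub]
    congr 1
    rw [Matrix.mulVec_smul]
  -- step 1: projection minimality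
  have step1 : vnorm (h - (cip hhat h / ((vnorm hhat ^ 2 : ℝ) : ℂ)) • hhat)
      ≤ smax * vnorm w := by
    calc vnorm (h - (cip hhat h / ((vnorm hhat ^ 2 : ℝ) : ℂ)) • hhat)
        ≤ vnorm (h - c₀ • hhat) := vnorm_proj_min h hhat c₀
      _ = vnorm (Φ.mulVec w) := by rw [hlin]
      _ ≤ smax * vnorm w := hupper w
  have hsmax : 0 ≤ smax := by
    have h1 := hupper u
    have h2 : (0:ℝ) < vnorm (Φ.mulVec u) := hhn
    nlinarith
  have key : sinAngle h hhat ≤ (smax / smin) * sinAngle u uh := by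
    rw [sinAngle, hsin_u]
    have hden : smin * vnorm u ≤ vnorm h := hlower u
    have hdenpos : 0 < smin * vnorm u := by positivity
    calc vnorm (h - (cip hhat h / ((vnorm hhat ^ 2 : ℝ) : ℂ)) • hhat) / vnorm h
        ≤ (smax * vnorm w) / (smin * vnorm u) := by
          exact div_le_div₀ (mul_nonneg hsmax (vnorm_nonneg w)) step1 hdenpos hden
      _ = (smax / smin) * (vnorm w / vnorm u) := by
          field_simp
  have hsqrt2 : (1:ℝ) ≤ Real.sqrt 2 := by
    rw [show (1:ℝ) = Real.sqrt 1 by simp]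
    exact Real.sqrt_le_sqrt (by norm_num)
  have hsin_nonneg : 0 ≤ sinAngle u uh :=
    div_nonneg (vnorm_nonneg _) (vnorm_nonneg _)
  calc sinAngle h hhat ≤ (smax / smin) * sinAngle u uh := key
    _ = (smax / smin) * 1 * sinAngle u uh := by ring
    _ ≤ (smax / smin) * Real.sqrt 2 * sinAngle u uh := by
        apply mul_le_mul_of_nonneg_right _ hsin_nonneg
        apply mul_le_mul_of_nonneg_left hsqrt2 (by positivity)
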